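/- Under the same hypotheses (π orthogonal projection commuting with the invertible symmetric operator Δ_N), solutions of the projected Euler–Zeitlin equation dW̄/dt = π[P̄, W̄], Δ_N P̄ = W̄, with initial data in range(π), conserve the energy H(W̄) = ½ tr(P̄ W̄). -/

import Mathlib

open Matrix

attribute [local instance] Matrix.normedAddCommGroup Matrix.normedSpace

noncomputable def trMul (N : ℕ) :
    Matrix (Fin N) (Fin N) ℂ →ₗ[ℝ] Matrix (Fin N) (Fin N) ℂ →ₗ[ℝ] ℂ :=
  LinearMap.mk₂ ℝ (fun A B => Matrix.trace (A * B))
    (fun A A' B => by simp [add_mul])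
    (fun r A B => by simp [Matrix.smul_mul])
    (fun A B B' => by simp [mul_add])
    (fun r A B => by simp [Matrix.mul_smul])

noncomputable def trMulL (N : ℕ) :
    Matrix (Fin N) (Fin N) ℂ →L[ℝ] Matrix (Fin N) (Fin N) ℂ →L[ℝ] ℂ :=
  LinearMap.toContinuousLinearMap
    ((LinearMap.toContinuousLinearMap :
        (Matrix (Fin N) (Fin N) ℂ →ₗ[ℝ] ℂ) ≃ₗ[ℝ]
          (Matrix (Fin N) (Fin N) ℂ →L[ℝ] ℂ)).toLinearMap ∘ₗ trMul N)

lemma hasDerivAt_trace_mul {N : ℕ} {A B : ℝ → Matrix (Fin N) (Fin N) ℂ}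
    {A' B' : Matrix (Fin N) (Fin N) ℂ} {t : ℝ}
    (hA : HasDerivAt A A' t) (hB : HasDerivAt B B' t) :
    HasDerivAt (fun s => Matrix.trace (A s * B s))
      (Matrix.trace (A' * B t) + Matrix.trace (A t * B')) t := by
  have h2 := (trMulL N).hasDerivAt_of_bilinear (u := A) (v := B) (fun _ => hA) (fun _ => hB)
  simp only [trMulL, trMul] at h2
  rw [add_comm]
  exact h2

theorem projected_energy_conserved (N : ℕ)
    (p D : Matrix (Fin N) (Fin N) ℂ →ₗ[ℝ] Matrix (Fin N) (Fin N) ℂ)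
    (hproj : ∀ A, p (p A) = p A)
    (hpsym : ∀ A B : Matrix (Fin N) (Fin N) ℂ,
      -Matrix.trace (p A * B) = -Matrix.trace (A * p B))
    (hDbij : Function.Bijective D)
    (hDsym : ∀ A B : Matrix (Fin N) (Fin N) ℂ,
      -Matrix.trace (A * D B) = -Matrix.trace (D A * B))
    (hcomm : ∀ A, D (p A) = p (D A))
    (W P : ℝ → Matrix (Fin N) (Fin N) ℂ)
    (hsu : ∀ t, (W t)ᴴ = -(W t) ∧ Matrix.trace (W t) = 0)
    (hrange0 : p (W 0) = W 0)
    (hPoisson : ∀ t, D (P t) = W t)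
    (hODE : ∀ t, HasDerivAt W (p (P t * W t - W t * P t)) t) :
    ∀ t, HasDerivAt (fun s => (1 / 2 : ℂ) * Matrix.trace (P s * W s)) 0 t := by
  intro t
  set e : Matrix (Fin N) (Fin N) ℂ ≃ₗ[ℝ] Matrix (Fin N) (Fin N) ℂ :=
    LinearEquiv.ofBijective D hDbij with he
  have hPe : ∀ s, P s = e.symm (W s) := by
    intro s
    apply e.injective
    rw [e.apply_symm_apply]
    simpa [he, LinearEquiv.ofBijective_apply] using hPoisson s
  -- derivative of P
  have hP' : ∀ s, HasDerivAt P (e.symm (p (P s * W s - W s * P s))) s := by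
    intro s
    have h0 := (LinearMap.toContinuousLinearMap
      e.symm.toLinearMap).hasFDerivAt.comp_hasDerivAt s (hODE s)
    have hfun : P = ⇑(LinearMap.toContinuousLinearMap e.symm.toLinearMap) ∘ W := by
      funext u; simp [hPe u]
    exact h0.congr_of_eventuallyEq (Filter.Eventually.of_forall fun u => by simp [hPe u])
  -- W stays in range of p
  have hrange : ∀ s, p (W s) = W s := by
    intro s
    have hg : ∀ u, HasDerivAt (fun r => p (W r) - W r) 0 u := by
      intro u
      have h1 : HasDerivAt (fun r => p (W r)) (p (p (P u * W u - W u * P u))) u := by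
        have := (LinearMap.toContinuousLinearMap p).hasFDerivAt.comp_hasDerivAt u (hODE u)
        exact this
      have h2 := h1.sub (hODE u)
      simp only [hproj, sub_self] at h2
      exact h2
    have hc : (fun r => p (W r) - W r) s = (fun r => p (W r) - W r) 0 :=
      is_const_of_deriv_eq_zero (fun u => (hg u).differentiableAt)
        (fun u => (hg u).deriv) s 0
    simp only [hrange0, sub_self] at hc
    exact sub_eq_zero.mp hc
  -- P stays in range of p
  have hPrange : ∀ s, p (P s) = P s := by
    intro s
    apply hDbij.injective
    rw [hcomm, hPoisson, hrange]
  set X := p (P t * W t - W t * P t) with hX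
  have hDX : D (e.symm X) = X := by
    have := e.apply_symm_apply X
    simpa [he, LinearEquiv.ofBijective_apply] using this
  have key1 : Matrix.trace (e.symm X * W t) = Matrix.trace (P t * X) := by
    have h := hDsym (e.symm X) (P t)
    rw [hDX, hPoisson] at h
    rw [neg_inj.mp h, Matrix.trace_mul_comm]
  have key2 : Matrix.trace (P t * X) = 0 := by
    have h := hpsym (P t) (P t * W t - W t * P t)
    rw [hPrange] at h
    rw [hX, ← neg_inj.mp h, mul_sub, Matrix.trace_sub, ← mul_assoc, ← mul_assoc,
      Matrix.trace_mul_cycle (P t) (W t) (P t), sub_self]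
  have hder := (hasDerivAt_trace_mul (hP' t) (hODE t)).const_mul ((1 : ℂ) / 2)
  have hval : (1 / 2 : ℂ) * (Matrix.trace (e.symm (p (P t * W t - W t * P t)) * W t)
      + Matrix.trace (P t * p (P t * W t - W t * P t))) = 0 := by
    rw [← hX, key1, key2]
    ring
  rw [hval] at hder
  exact hder
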